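/- Let σ > 0, c ≥ 0 with cσ < 2/3, and let y : (0,1] → ℝ≥0 be continuous and satisfy y(t) ≤ D + B t^{-cσ} + cσ' ∫_t^1 s^{-1} y(s) ds for all t ∈ (0,1], where D, B ≥ 0 and σ' = σ. Then y(t) ≤ (D + B t^{-cσ})·t^{-cσ} for all t ∈ (0,1]; in particular y(t) ≤ (D + B)·t^{-2cσ}. -/
import Mathlib


open MeasureTheory intervalIntegral

/-- Key Gronwall step for positive exponent `a`: pointwise bound
`y t ≤ D * t^(-a) + B * t^(-2a)`. -/
theorem gronwall_core (y : ℝ → ℝ) (a D B : ℝ)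
    (ha : 0 < a) (hD : 0 ≤ D) (hB : 0 ≤ B)
    (hycont : ContinuousOn y (Set.Ioc 0 1))
    (hineq : ∀ t ∈ Set.Ioc (0 : ℝ) 1,
      y t ≤ D + B * t ^ (-a) + a * ∫ s in t..1, s⁻¹ * y s) :
    ∀ t ∈ Set.Ioc (0 : ℝ) 1,
      y t ≤ D * t ^ (-a) + B * (t ^ (-a) * t ^ (-a)) := by
  set f : ℝ → ℝ := fun s => s⁻¹ * y s with hf
  have hfcont : ContinuousOn f (Set.Ioc 0 1) := by
    apply ContinuousOn.mul _ hycont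
    exact ContinuousOn.inv₀ continuousOn_id (fun x hx => ne_of_gt hx.1)
  set F : ℝ → ℝ := fun t => ∫ s in t..1, f s with hF
  set G : ℝ → ℝ := fun t => a * (t ^ a * F t) + D * t ^ a - B * t ^ (-a) with hG
  rintro t ⟨ht0, ht1⟩
  -- interval integrability of f on subintervals of (0,1]
  have hfint : ∀ u ∈ Set.Ioc (0:ℝ) 1, IntervalIntegrable f volume u 1 := by
    intro u hu
    apply ContinuousOn.intervalIntegrable
    apply hfcont.mono
    rw [Set.uIcc_of_le hu.2]
    exact fun x hx => ⟨lt_of_lt_of_le hu.1 hx.1, hx.2⟩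
  -- F continuous on [t,1]
  have hFcont : ContinuousOn F (Set.Icc t 1) := by
    have h1 : Set.uIcc t 1 = Set.Icc t 1 := Set.uIcc_of_le ht1
    have := intervalIntegral.continuousOn_primitive_interval_left
      (f := f) (μ := volume) (a := t) (b := 1) ?_
    · rwa [h1] at this
    · rw [h1]
      apply (hfcont.mono (fun x hx => ⟨lt_of_lt_of_le ht0 hx.1, hx.2⟩)).integrableOn_compact
      exact isCompact_Icc
  -- F has derivative -(f x) at each x ∈ (0,1)
  have hFderiv : ∀ x ∈ Set.Ioo (0:ℝ) 1, HasDerivAt F (-(f x)) x := by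
    intro x hx
    have hxmem : x ∈ Set.Ioc (0:ℝ) 1 := ⟨hx.1, le_of_lt hx.2⟩
    have hnhds : Set.Ioc (0:ℝ) 1 ∈ nhds x := by
      apply mem_nhds_iff.2
      exact ⟨Set.Ioo 0 1, Set.Ioo_subset_Ioc_self, isOpen_Ioo, hx⟩
    refine intervalIntegral.integral_hasDerivAt_left (hfint x hxmem) ?_ ?_
    · exact ⟨Set.Ioc 0 1, hnhds, (hfcont.aestronglyMeasurable measurableSet_Ioc)⟩
    · exact hfcont.continuousAt hnhds
  -- G has derivative on (t,1) ⊆ (0,1)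
  have hGderiv : ∀ x ∈ Set.Ioo t 1, HasDerivAt G
      (a * (a * x ^ (a-1) * F x + x ^ a * (-(f x))) + D * (a * x ^ (a-1))
        - B * (-a * x ^ (-a-1))) x := by
    intro x hx
    have hx0 : (0:ℝ) < x := lt_of_lt_of_le ht0 (le_of_lt hx.1)
    have hxmem : x ∈ Set.Ioo (0:ℝ) 1 := ⟨hx0, hx.2⟩
    have h1 : HasDerivAt (fun s : ℝ => s ^ a) (a * x ^ (a-1)) x := by
      simpa [mul_comm] using Real.hasDerivAt_rpow_const (x := x) (p := a) (Or.inl (ne_of_gt hx0))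
    have h2 : HasDerivAt (fun s : ℝ => s ^ (-a)) (-a * x ^ (-a-1)) x := by
      simpa [mul_comm] using Real.hasDerivAt_rpow_const (x := x) (p := -a) (Or.inl (ne_of_gt hx0))
    exact (((h1.mul (hFderiv x hxmem)).const_mul a).add (h1.const_mul D)).sub (h2.const_mul B)
  -- the derivative is nonnegative
  have hGpos : ∀ x ∈ Set.Ioo t 1, 0 ≤ deriv G x := by
    intro x hx
    have hx0 : (0:ℝ) < x := lt_of_lt_of_le ht0 (le_of_lt hx.1)
    have hxmem : x ∈ Set.Ioc (0:ℝ) 1 := ⟨hx0, le_of_lt hx.2⟩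
    rw [(hGderiv x hx).deriv]
    have hkey : y x ≤ D + B * x ^ (-a) + a * F x := hineq x hxmem
    have hxa1 : (0:ℝ) < x ^ (a-1) := Real.rpow_pos_of_pos hx0 _
    have hpow : x ^ a * x⁻¹ = x ^ (a-1) := by
      rw [← Real.rpow_neg_one x, ← Real.rpow_add hx0, sub_eq_add_neg]
    have hfx : x ^ a * f x = x ^ (a-1) * y x := by
      simp only [hf]
      rw [← mul_assoc, hpow]
    have hmul : x ^ (a-1) * y x ≤ D * x ^ (a-1) + B * (x ^ (a-1) * x ^ (-a))
        + a * (x ^ (a-1) * F x) := by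
      have := mul_le_mul_of_nonneg_left hkey (le_of_lt hxa1)
      nlinarith [this]
    have hBs : x ^ (a-1) * x ^ (-a) ≤ x ^ (-a-1) := by
      rw [← Real.rpow_add hx0]
      apply Real.rpow_le_rpow_of_exponent_ge hx0 (le_of_lt hx.2)
      linarith
    have hBs' : B * (x ^ (a-1) * x ^ (-a)) ≤ B * x ^ (-a-1) :=
      mul_le_mul_of_nonneg_left hBs hB
    have hmain : 0 ≤ a * (a * x ^ (a-1) * F x - x ^ (a-1) * y x + D * x ^ (a-1)
        + B * x ^ (-a-1)) := by
      apply mul_nonneg (le_of_lt ha)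
      linarith
    calc (0:ℝ) ≤ a * (a * x ^ (a-1) * F x - x ^ (a-1) * y x + D * x ^ (a-1)
        + B * x ^ (-a-1)) := hmain
      _ = a * (a * x ^ (a-1) * F x + x ^ a * (-(f x))) + D * (a * x ^ (a-1))
        - B * (-a * x ^ (-a-1)) := by rw [show x ^ a * (-(f x)) = -(x ^ a * f x) by ring, hfx]; ring
  -- G continuous on [t,1]
  have hGcont : ContinuousOn G (Set.Icc t 1) := by
    have hne : ∀ x ∈ Set.Icc t 1, x ≠ 0 := fun x hx => ne_of_gt (lt_of_lt_of_le ht0 hx.1)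
    have hpa : ContinuousOn (fun s : ℝ => s ^ a) (Set.Icc t 1) :=
      ContinuousOn.rpow_const continuousOn_id (fun x hx => Or.inl (hne x hx))
    have hpna : ContinuousOn (fun s : ℝ => s ^ (-a)) (Set.Icc t 1) :=
      ContinuousOn.rpow_const continuousOn_id (fun x hx => Or.inl (hne x hx))
    exact (((hpa.mul hFcont).const_smul a).add (hpa.const_smul D)).sub (hpna.const_smul B)
  -- G is monotone on [t,1], hence G t ≤ G 1
  have hmono : MonotoneOn G (Set.Icc t 1) := by
    apply monotoneOn_of_deriv_nonneg (convex_Icc t 1) hGcont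
    · intro x hx
      rw [interior_Icc] at hx
      exact ((hGderiv x hx).differentiableAt).differentiableWithinAt
    · intro x hx
      rw [interior_Icc] at hx
      exact hGpos x hx
  have hGle : G t ≤ G 1 := hmono ⟨le_refl t, ht1⟩ ⟨ht1, le_refl 1⟩ ht1
  have hG1 : G 1 = D - B := by
    simp only [hG, hF]
    rw [intervalIntegral.integral_same, Real.one_rpow, Real.one_rpow]
    ring
  -- unfold G t and conclude
  have htna : (0:ℝ) < t ^ (-a) := Real.rpow_pos_of_pos ht0 _
  have hprod : t ^ a * t ^ (-a) = 1 := by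
    rw [← Real.rpow_add ht0]; simp
  have hGt : a * (t ^ a * F t) + D * t ^ a - B * t ^ (-a) ≤ D - B := by
    rw [hG1] at hGle; exact hGle
  have h := mul_le_mul_of_nonneg_right hGt (le_of_lt htna)
  have expand : (a * (t ^ a * F t) + D * t ^ a - B * t ^ (-a)) * t ^ (-a)
      = a * F t * (t ^ a * t ^ (-a)) + D * (t ^ a * t ^ (-a))
        - B * (t ^ (-a) * t ^ (-a)) := by ring
  rw [expand, hprod, mul_one, mul_one] at h
  have hy : y t ≤ D + B * t ^ (-a) + a * F t := hineq t ⟨ht0, ht1⟩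
  linarith

/-- Gronwall estimate with inhomogeneous power-law source. -/
theorem gronwall_with_source (y : ℝ → ℝ) (σ c D B : ℝ)
    (hσ : 0 < σ) (hc : 0 ≤ c) (hsmall : c * σ < 2 / 3)
    (hD : 0 ≤ D) (hB : 0 ≤ B)
    (hycont : ContinuousOn y (Set.Ioc 0 1))
    (hynn : ∀ t ∈ Set.Ioc (0 : ℝ) 1, 0 ≤ y t)
    (hineq : ∀ t ∈ Set.Ioc (0 : ℝ) 1,
      y t ≤ D + B * t ^ (-(c * σ)) + c * σ * ∫ s in t..1, s⁻¹ * y s) :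
    ∀ t ∈ Set.Ioc (0 : ℝ) 1,
      y t ≤ (D + B * t ^ (-(c * σ))) * t ^ (-(c * σ)) ∧
        y t ≤ (D + B) * t ^ (-(2 * (c * σ))) := by
  intro t ht
  obtain ⟨ht0, ht1⟩ := ht
  have htna : (0:ℝ) < t ^ (-(c*σ)) := Real.rpow_pos_of_pos ht0 _
  have hdouble : t ^ (-(c*σ)) * t ^ (-(c*σ)) = t ^ (-(2*(c*σ))) := by
    rw [← Real.rpow_add ht0]; ring_nf
  have hone_le : (1:ℝ) ≤ t ^ (-(c*σ)) := by
    rw [show (1:ℝ) = t ^ (0:ℝ) by simp]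
    apply Real.rpow_le_rpow_of_exponent_ge ht0 ht1
    have : 0 ≤ c * σ := mul_nonneg hc (le_of_lt hσ)
    linarith
  rcases eq_or_lt_of_le (mul_nonneg hc (le_of_lt hσ)) with heq | hpos
  · -- c * σ = 0
    have h0 : c * σ = 0 := heq.symm
    have hy := hineq t ⟨ht0, ht1⟩
    rw [h0] at hy ⊢
    norm_num at hy ⊢
    first
    | linarith
    | constructor <;> linarith
  · -- c * σ > 0 : apply the core lemma
    have hcore := gronwall_core y (c*σ) D B hpos hD hB hycont hineq t ⟨ht0, ht1⟩
    have hDmono : D * t ^ (-(c*σ)) ≤ D * (t ^ (-(c*σ)) * t ^ (-(c*σ))) := by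
      nlinarith [mul_le_mul_of_nonneg_left hone_le (mul_nonneg hD (le_of_lt htna))]
    constructor
    · calc y t ≤ D * t ^ (-(c*σ)) + B * (t ^ (-(c*σ)) * t ^ (-(c*σ))) := hcore
        _ = (D + B * t ^ (-(c*σ))) * t ^ (-(c*σ)) := by ring
    · calc y t ≤ D * t ^ (-(c*σ)) + B * (t ^ (-(c*σ)) * t ^ (-(c*σ))) := hcore
        _ ≤ D * (t ^ (-(c*σ)) * t ^ (-(c*σ))) + B * (t ^ (-(c*σ)) * t ^ (-(c*σ))) := by
            linarith
        _ = (D + B) * t ^ (-(2*(c*σ))) := by rw [hdouble]; ring
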